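/- Let d ≥ 2 be a natural number and let ζ ∈ ℂ be a primitive d-th root of unity. There is no nonzero vector v = (v₁, v₂, v₃, v₄, v₅) ∈ ℂ⁵ satisfying v₁^d + v₂^d + v₃^d + v₄^d + v₅^d = 0 such that for every i ∈ {1,2,3,4} the vector obtained from v by multiplying its i-th coordinate by ζ (and leaving the other coordinates unchanged) is a complex scalar multiple of v. -/

import Mathlib

theorem stmt_0 (d : ℕ) (hd : 2 ≤ d) (ζ : ℂ) (hζ : IsPrimitiveRoot ζ d) :
    ¬ ∃ v : Fin 5 → ℂ, v ≠ 0 ∧ (∑ i, v i ^ d) = 0 ∧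
      ∀ i : Fin 5, i ≠ 4 →
        ∃ c : ℂ, (fun j => if j = i then ζ * v j else v j) = c • v := by
  rintro ⟨v, hv0, hsum, hfix⟩
  have hζ1 : ζ ≠ 1 := hζ.ne_one (by omega)
  have hzero : ∀ i : Fin 5, i ≠ 4 → v i = 0 := by
    intro i hi
    obtain ⟨c, hc⟩ := hfix i hi
    by_contra hvi
    have hci : ζ * v i = c * v i := by
      have := congrFun hc i
      simpa using this
    have hcζ : c = ζ := by
      exact (mul_right_cancel₀ hvi hci).symm
    have hj : ∀ j : Fin 5, j ≠ i → v j = 0 := by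
      intro j hj
      have := congrFun hc j
      simp [hj, hcζ] at this
      have h0 : (ζ - 1) * v j = 0 := by linear_combination -this
      rcases mul_eq_zero.mp h0 with h | h
      · exact absurd (sub_eq_zero.mp h) hζ1
      · exact h
    have : (∑ k, v k ^ d) = v i ^ d := by
      apply Finset.sum_eq_single i
      · intro j _ hji
        rw [hj j hji]
        exact zero_pow (by omega)
      · intro h; exact absurd (Finset.mem_univ i) h
    rw [hsum] at this
    exact hvi (pow_eq_zero_iff (by omega : d ≠ 0) |>.mp this.symm)
  have h4 : v 4 = 0 := by
    have : (∑ k, v k ^ d) = v 4 ^ d := by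
      apply Finset.sum_eq_single 4
      · intro j _ hji
        rw [hzero j hji]
        exact zero_pow (by omega)
      · intro h; exact absurd (Finset.mem_univ _) h
    rw [hsum] at this
    exact pow_eq_zero_iff (by omega : d ≠ 0) |>.mp this.symm
  apply hv0
  funext j
  by_cases hj : j = 4
  · simpa [hj] using h4
  · simpa using hzero j hj
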